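/- Let J be an integrable model structure on ℂⁿ (satisfying ∂L̃_{2n−1,k}/∂z̄^j = ∂L̃_{2n−1,j}/∂z̄^k for all j,k ≤ n−1). Then the global diffeomorphism F of ℂⁿ defined by F('z, zⁿ) = ('z, zⁿ − (i/4)Σ_j z̄^j L̃_{2n−1,j}('z,'z̄) − (i/4)Σ_j z̄^j L̃_{2n−1,j}('z,0)) is a (J, J_st)-biholomorphism of ℂⁿ, i.e. dF ∘ J = J_st ∘ dF. -/

import Mathlib

open Complex BigOperators

/-- The entry `L̃_{2n-1,k}(z,z̄) = Σ_{l ≠ k} (α_l^k z^l + β_l^k conj(z^l))`. -/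
noncomputable def Ltilde (n : ℕ) (α β : Fin n → Fin n → ℂ) (k : Fin n) (z : Fin n → ℂ) : ℂ :=
  ∑ l : Fin n, if l = k ∨ (l : ℕ) + 1 = n then 0
    else (α l k * z l + β l k * (starRingEnd ℂ) (z l))

/-- `L̃_{2n-1,k}('z, 0)`: the holomorphic part of `L̃_{2n-1,k}`. -/
noncomputable def Ltilde0 (n : ℕ) (α : Fin n → Fin n → ℂ) (k : Fin n) (z : Fin n → ℂ) : ℂ :=
  ∑ l : Fin n, if l = k ∨ (l : ℕ) + 1 = n then 0 else α l k * z l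

/-- The model almost complex structure on `ℂⁿ` in complex coordinates. -/
noncomputable def modelJ (n : ℕ) (α β : Fin n → Fin n → ℂ)
    (z : Fin n → ℂ) (v : Fin n → ℂ) : Fin n → ℂ := fun k =>
  if (k : ℕ) + 1 = n then
    Complex.I * v k +
      ∑ j : Fin n, (if (j : ℕ) + 1 = n then 0
        else Ltilde n α β j z * (starRingEnd ℂ) (v j))
  else Complex.I * v k

/-- The Wirtinger derivative `∂f/∂z̄^j = ½(∂f/∂x^j + i ∂f/∂y^j)` of `f : ℂⁿ → ℂ`. -/
noncomputable def dbar (n : ℕ) (f : (Fin n → ℂ) → ℂ) (j : Fin n) (z : Fin n → ℂ) : ℂ :=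
  (1 / 2 : ℂ) * (fderiv ℝ f z (Pi.single j 1) +
    Complex.I * fderiv ℝ f z (Pi.single j Complex.I))

/-- The global diffeomorphism
`F('z, zⁿ) = ('z, zⁿ - (i/4) Σ_j z̄^j L̃_{2n-1,j}('z,'z̄) - (i/4) Σ_j z̄^j L̃_{2n-1,j}('z,0))`. -/
noncomputable def modelF (n : ℕ) (α β : Fin n → Fin n → ℂ)
    (z : Fin n → ℂ) : Fin n → ℂ := fun k =>
  if (k : ℕ) + 1 = n then
    z k - (Complex.I / 4) *
        (∑ j : Fin n, if (j : ℕ) + 1 = n then 0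
          else (starRingEnd ℂ) (z j) * Ltilde n α β j z)
      - (Complex.I / 4) *
        (∑ j : Fin n, if (j : ℕ) + 1 = n then 0
          else (starRingEnd ℂ) (z j) * Ltilde0 n α j z)
  else z k

/-! ### Auxiliary linear maps and derivative computations -/

/-- `z ↦ conj (z j)` as a continuous `ℝ`-linear map. -/
noncomputable def conjev (n : ℕ) (j : Fin n) : (Fin n → ℂ) →L[ℝ] ℂ :=
  Complex.conjCLE.toContinuousLinearMap.comp (ContinuousLinearMap.proj j)

@[simp] lemma conjev_apply (n : ℕ) (j : Fin n) (w : Fin n → ℂ) :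
    conjev n j w = (starRingEnd ℂ) (w j) := rfl

/-- `Ltilde n α β k` as a continuous `ℝ`-linear map. -/
noncomputable def LtCLM (n : ℕ) (α β : Fin n → Fin n → ℂ) (k : Fin n) :
    (Fin n → ℂ) →L[ℝ] ℂ :=
  ∑ l : Fin n, if l = k ∨ (l : ℕ) + 1 = n then 0
    else α l k • ContinuousLinearMap.proj l + β l k • conjev n l

/-- `Ltilde0 n α k` as a continuous `ℝ`-linear map. -/
noncomputable def Lt0CLM (n : ℕ) (α : Fin n → Fin n → ℂ) (k : Fin n) :
    (Fin n → ℂ) →L[ℝ] ℂ :=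
  ∑ l : Fin n, if l = k ∨ (l : ℕ) + 1 = n then 0
    else α l k • ContinuousLinearMap.proj l

@[simp] lemma LtCLM_apply (n : ℕ) (α β : Fin n → Fin n → ℂ) (k : Fin n) (w : Fin n → ℂ) :
    LtCLM n α β k w = Ltilde n α β k w := by
  simp only [LtCLM, Ltilde, ContinuousLinearMap.sum_apply]
  refine Finset.sum_congr rfl fun l _ => ?_
  split_ifs with h
  · simp
  · simp [smul_eq_mul]

@[simp] lemma Lt0CLM_apply (n : ℕ) (α : Fin n → Fin n → ℂ) (k : Fin n) (w : Fin n → ℂ) :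
    Lt0CLM n α k w = Ltilde0 n α k w := by
  simp only [Lt0CLM, Ltilde0, ContinuousLinearMap.sum_apply]
  refine Finset.sum_congr rfl fun l _ => ?_
  split_ifs with h
  · simp
  · simp [smul_eq_mul]

lemma hasConj (n : ℕ) (j : Fin n) (z : Fin n → ℂ) :
    HasFDerivAt (fun z : Fin n → ℂ => (starRingEnd ℂ) (z j)) (conjev n j) z :=
  (Complex.conjCLE.toContinuousLinearMap.hasFDerivAt).comp z (hasFDerivAt_apply j z)

lemma hasLt (n : ℕ) (α β : Fin n → Fin n → ℂ) (k : Fin n) (z : Fin n → ℂ) :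
    HasFDerivAt (Ltilde n α β k) (LtCLM n α β k) z := by
  unfold Ltilde LtCLM
  apply HasFDerivAt.fun_sum
  intro l _
  split_ifs with h
  · exact hasFDerivAt_const 0 z
  · exact ((hasFDerivAt_apply l z).const_mul (α l k)).add ((hasConj n l z).const_mul (β l k))

lemma hasLt0 (n : ℕ) (α : Fin n → Fin n → ℂ) (k : Fin n) (z : Fin n → ℂ) :
    HasFDerivAt (Ltilde0 n α k) (Lt0CLM n α k) z := by
  unfold Ltilde0 Lt0CLM
  apply HasFDerivAt.fun_sum
  intro l _
  split_ifs with h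
  · exact hasFDerivAt_const 0 z
  · exact (hasFDerivAt_apply l z).const_mul (α l k)

lemma Lt_single (n : ℕ) (α β : Fin n → Fin n → ℂ) (k j : Fin n) (c : ℂ) :
    Ltilde n α β k (Pi.single j c) =
      if j = k ∨ (j : ℕ) + 1 = n then 0 else α j k * c + β j k * (starRingEnd ℂ) c := by
  unfold Ltilde
  rw [Finset.sum_eq_single j]
  · simp
  · intro l _ hl; simp [Pi.single_eq_of_ne hl]
  · simp

/-- Computation of the Wirtinger derivative of `Ltilde`. -/
lemma dbarLt (n : ℕ) (α β : Fin n → Fin n → ℂ) (k j : Fin n) (z : Fin n → ℂ) :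
    dbar n (Ltilde n α β k) j z = if j = k ∨ (j : ℕ) + 1 = n then 0 else β j k := by
  unfold dbar
  rw [(hasLt n α β k z).fderiv, LtCLM_apply, LtCLM_apply, Lt_single, Lt_single]
  split_ifs with h
  · simp
  · simp only [map_one, Complex.conj_I]
    linear_combination ((α j k - β j k)/2) * Complex.I_sq

/-- First summand of the derivative of the last component of `modelF`. -/
noncomputable def dS (n : ℕ) (α β : Fin n → Fin n → ℂ) (z : Fin n → ℂ) :
    (Fin n → ℂ) →L[ℝ] ℂ :=
  ∑ j : Fin n, if (j : ℕ) + 1 = n then 0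
    else (starRingEnd ℂ) (z j) • LtCLM n α β j + (Ltilde n α β j z) • conjev n j

/-- Second summand of the derivative of the last component of `modelF`. -/
noncomputable def dS0 (n : ℕ) (α : Fin n → Fin n → ℂ) (z : Fin n → ℂ) :
    (Fin n → ℂ) →L[ℝ] ℂ :=
  ∑ j : Fin n, if (j : ℕ) + 1 = n then 0
    else (starRingEnd ℂ) (z j) • Lt0CLM n α j + (Ltilde0 n α j z) • conjev n j

lemma dS_apply (n : ℕ) (α β : Fin n → Fin n → ℂ) (z w : Fin n → ℂ) :
    dS n α β z w = ∑ j : Fin n, if (j : ℕ) + 1 = n then 0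
      else ((starRingEnd ℂ) (z j) * Ltilde n α β j w
        + Ltilde n α β j z * (starRingEnd ℂ) (w j)) := by
  simp only [dS, ContinuousLinearMap.sum_apply]
  refine Finset.sum_congr rfl fun j _ => ?_
  split_ifs with h
  · simp
  · simp [smul_eq_mul]

lemma dS0_apply (n : ℕ) (α : Fin n → Fin n → ℂ) (z w : Fin n → ℂ) :
    dS0 n α z w = ∑ j : Fin n, if (j : ℕ) + 1 = n then 0
      else ((starRingEnd ℂ) (z j) * Ltilde0 n α j w
        + Ltilde0 n α j z * (starRingEnd ℂ) (w j)) := by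
  simp only [dS0, ContinuousLinearMap.sum_apply]
  refine Finset.sum_congr rfl fun j _ => ?_
  split_ifs with h
  · simp
  · simp [smul_eq_mul]

/-- The total derivative of `modelF`. -/
noncomputable def DF (n : ℕ) (α β : Fin n → Fin n → ℂ) (z : Fin n → ℂ) :
    (Fin n → ℂ) →L[ℝ] (Fin n → ℂ) :=
  ContinuousLinearMap.pi (fun k => if (k : ℕ) + 1 = n then
      ContinuousLinearMap.proj k - (Complex.I / 4) • dS n α β z
        - (Complex.I / 4) • dS0 n α z
    else ContinuousLinearMap.proj k)

lemma hasF (n : ℕ) (α β : Fin n → Fin n → ℂ) (z : Fin n → ℂ) :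
    HasFDerivAt (modelF n α β) (DF n α β z) z := by
  unfold modelF DF
  apply hasFDerivAt_pi.2
  intro k
  split_ifs with hk
  · refine HasFDerivAt.sub (HasFDerivAt.sub (hasFDerivAt_apply k z) ?_) ?_
    · refine HasFDerivAt.const_mul ?_ _
      apply HasFDerivAt.fun_sum
      intro j _
      split_ifs with hj
      · exact hasFDerivAt_const 0 z
      · exact (hasConj n j z).mul (hasLt n α β j z)
    · refine HasFDerivAt.const_mul ?_ _
      apply HasFDerivAt.fun_sum
      intro j _
      split_ifs with hj
      · exact hasFDerivAt_const 0 z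
      · exact (hasConj n j z).mul (hasLt0 n α j z)
  · exact hasFDerivAt_apply k z

/-! ### Behaviour of `Ltilde` under `modelJ` -/

lemma hJat (n : ℕ) (α β : Fin n → Fin n → ℂ) (z v : Fin n → ℂ) (j : Fin n)
    (hj : ¬ (j : ℕ) + 1 = n) : modelJ n α β z v j = Complex.I * v j := by
  simp [modelJ, hj]

lemma hLJ (n : ℕ) (α β : Fin n → Fin n → ℂ) (z v : Fin n → ℂ) (j : Fin n) :
    Ltilde n α β j (modelJ n α β z v) =
      2 * Complex.I * Ltilde0 n α j v - Complex.I * Ltilde n α β j v := by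
  unfold Ltilde Ltilde0
  rw [Finset.mul_sum, Finset.mul_sum, ← Finset.sum_sub_distrib]
  refine Finset.sum_congr rfl fun l _ => ?_
  split_ifs with h
  · simp
  · push_neg at h
    rw [hJat n α β z v l h.2]
    simp only [map_mul, Complex.conj_I]
    ring

lemma hL0J (n : ℕ) (α β : Fin n → Fin n → ℂ) (z v : Fin n → ℂ) (j : Fin n) :
    Ltilde0 n α j (modelJ n α β z v) = Complex.I * Ltilde0 n α j v := by
  unfold Ltilde0
  rw [Finset.mul_sum]
  refine Finset.sum_congr rfl fun l _ => ?_
  split_ifs with h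
  · simp
  · push_neg at h
    rw [hJat n α β z v l h.2]
    ring

lemma hLsub (n : ℕ) (α β : Fin n → Fin n → ℂ) (j : Fin n) (w : Fin n → ℂ) :
    Ltilde n α β j w - Ltilde0 n α j w =
      ∑ l : Fin n, if l = j ∨ (l : ℕ) + 1 = n then 0
        else β l j * (starRingEnd ℂ) (w l) := by
  unfold Ltilde Ltilde0
  rw [← Finset.sum_sub_distrib]
  refine Finset.sum_congr rfl fun l _ => ?_
  split_ifs with h
  · simp
  · ring

/-- The key symmetry consequence of integrability. -/
lemma cross (n : ℕ) (α β : Fin n → Fin n → ℂ)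
    (βsymm : ∀ j k : Fin n, (j : ℕ) + 1 < n → (k : ℕ) + 1 < n → β j k = β k j)
    (z v : Fin n → ℂ) :
    (∑ j : Fin n, if (j : ℕ) + 1 = n then 0
        else (starRingEnd ℂ) (v j) * Ltilde n α β j z)
      - (∑ j : Fin n, if (j : ℕ) + 1 = n then 0
        else (starRingEnd ℂ) (v j) * Ltilde0 n α j z)
    = (∑ j : Fin n, if (j : ℕ) + 1 = n then 0
        else (starRingEnd ℂ) (z j) * Ltilde n α β j v)
      - (∑ j : Fin n, if (j : ℕ) + 1 = n then 0
        else (starRingEnd ℂ) (z j) * Ltilde0 n α j v) := by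
  rw [← Finset.sum_sub_distrib, ← Finset.sum_sub_distrib]
  have expand : ∀ (w u : Fin n → ℂ) (j : Fin n),
      ((if (j : ℕ) + 1 = n then 0 else (starRingEnd ℂ) (w j) * Ltilde n α β j u)
        - (if (j : ℕ) + 1 = n then 0 else (starRingEnd ℂ) (w j) * Ltilde0 n α j u))
      = ∑ l : Fin n, if (j : ℕ) + 1 = n then 0
          else if l = j ∨ (l : ℕ) + 1 = n then 0
          else (starRingEnd ℂ) (w j) * (β l j * (starRingEnd ℂ) (u l)) := by
    intro w u j
    by_cases hj : (j : ℕ) + 1 = n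
    · simp [hj]
    · simp only [if_neg hj, ← mul_sub, hLsub n α β j u, Finset.mul_sum]
      refine Finset.sum_congr rfl fun l _ => ?_
      split_ifs with h
      · simp
      · rfl
  calc (∑ j : Fin n, ((if (j : ℕ) + 1 = n then 0 else (starRingEnd ℂ) (v j) * Ltilde n α β j z)
        - (if (j : ℕ) + 1 = n then 0 else (starRingEnd ℂ) (v j) * Ltilde0 n α j z)))
      = ∑ j : Fin n, ∑ l : Fin n, (if (j : ℕ) + 1 = n then 0
          else if l = j ∨ (l : ℕ) + 1 = n then 0
          else (starRingEnd ℂ) (v j) * (β l j * (starRingEnd ℂ) (z l))) := by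
        exact Finset.sum_congr rfl fun j _ => expand v z j
    _ = ∑ l : Fin n, ∑ j : Fin n, (if (j : ℕ) + 1 = n then 0
          else if l = j ∨ (l : ℕ) + 1 = n then 0
          else (starRingEnd ℂ) (v j) * (β l j * (starRingEnd ℂ) (z l))) := Finset.sum_comm
    _ = ∑ j : Fin n, ∑ l : Fin n, (if (j : ℕ) + 1 = n then 0
          else if l = j ∨ (l : ℕ) + 1 = n then 0
          else (starRingEnd ℂ) (z j) * (β l j * (starRingEnd ℂ) (v l))) := by
        refine Finset.sum_congr rfl fun x _ => Finset.sum_congr rfl fun y _ => ?_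
        by_cases hxy : y = x
        · subst hxy; simp
        · by_cases hx : (x : ℕ) + 1 = n
          · simp [hx, hxy]
          · by_cases hy : (y : ℕ) + 1 = n
            · simp [hy, Ne.symm hxy, hxy, hx]
            · simp only [if_neg hx, if_neg hy]
              rw [if_neg (by tauto), if_neg (by tauto)]
              rw [βsymm y x (by omega) (by omega)]
              ring
    _ = ∑ j : Fin n, ((if (j : ℕ) + 1 = n then 0 else (starRingEnd ℂ) (z j) * Ltilde n α β j v)
        - (if (j : ℕ) + 1 = n then 0 else (starRingEnd ℂ) (z j) * Ltilde0 n α j v)) := by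
        exact (Finset.sum_congr rfl fun j _ => (expand z v j).symm)

/-- if the model structure `J` is integrable, i.e. satisfies the
compatibility conditions `∂L̃_{2n-1,k}/∂z̄^j = ∂L̃_{2n-1,j}/∂z̄^k`, then the global
diffeomorphism `F` above is `(J, J_st)`-holomorphic: `dF ∘ J = J_st ∘ dF`
(`J_st` being multiplication by `i`). -/
theorem stmt5 (n : ℕ) (hn : 1 ≤ n) (α β : Fin n → Fin n → ℂ)
    (hcompat : ∀ (j k : Fin n) (z : Fin n → ℂ), (j : ℕ) + 1 < n → (k : ℕ) + 1 < n →
      dbar n (Ltilde n α β k) j z = dbar n (Ltilde n α β j) k z) :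
    ∀ (z v : Fin n → ℂ),
      fderiv ℝ (modelF n α β) z (modelJ n α β z v) =
        Complex.I • fderiv ℝ (modelF n α β) z v := by
  have βsymm : ∀ j k : Fin n, (j : ℕ) + 1 < n → (k : ℕ) + 1 < n → β j k = β k j := by
    intro j k hj hk
    by_cases hjk : j = k
    · subst hjk; rfl
    have h := hcompat j k 0 hj hk
    rw [dbarLt, dbarLt] at h
    rw [if_neg (by push_neg; exact ⟨hjk, by omega⟩),
        if_neg (by push_neg; exact ⟨Ne.symm hjk, by omega⟩)] at h
    exact h
  intro z v
  rw [(hasF n α β z).fderiv]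
  funext k
  simp only [DF, ContinuousLinearMap.pi_apply, Pi.smul_apply, smul_eq_mul]
  by_cases hk : (k : ℕ) + 1 = n
  · rw [if_pos hk]
    simp only [ContinuousLinearMap.sub_apply, ContinuousLinearMap.smul_apply,
      ContinuousLinearMap.proj_apply, smul_eq_mul]
    -- abbreviations for the four basic sums
    set Sa := ∑ j : Fin n, (if (j : ℕ) + 1 = n then 0
      else (starRingEnd ℂ) (v j) * Ltilde n α β j z) with hSa
    set Sa0 := ∑ j : Fin n, (if (j : ℕ) + 1 = n then 0
      else (starRingEnd ℂ) (v j) * Ltilde0 n α j z) with hSa0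
    set Sb := ∑ j : Fin n, (if (j : ℕ) + 1 = n then 0
      else (starRingEnd ℂ) (z j) * Ltilde n α β j v) with hSb
    set Sb0 := ∑ j : Fin n, (if (j : ℕ) + 1 = n then 0
      else (starRingEnd ℂ) (z j) * Ltilde0 n α j v) with hSb0
    have h0 : modelJ n α β z v k = Complex.I * v k + Sa := by
      rw [hSa]
      simp only [modelJ, if_pos hk]
      congr 1
      refine Finset.sum_congr rfl fun j _ => ?_
      split_ifs with h
      · rfl
      · ring
    have h1 : dS n α β z (modelJ n α β z v) =
        2 * Complex.I * Sb0 - Complex.I * Sb - Complex.I * Sa := by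
      rw [dS_apply, hSa, hSb, hSb0, Finset.mul_sum, Finset.mul_sum, Finset.mul_sum,
        ← Finset.sum_sub_distrib, ← Finset.sum_sub_distrib]
      refine Finset.sum_congr rfl fun j _ => ?_
      split_ifs with h
      · simp
      · rw [hLJ n α β z v j, hJat n α β z v j h]
        simp only [map_mul, Complex.conj_I]
        ring
    have h2 : dS0 n α z (modelJ n α β z v) = Complex.I * Sb0 - Complex.I * Sa0 := by
      rw [dS0_apply, hSa0, hSb0, Finset.mul_sum, Finset.mul_sum, ← Finset.sum_sub_distrib]
      refine Finset.sum_congr rfl fun j _ => ?_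
      split_ifs with h
      · simp
      · rw [hL0J n α β z v j, hJat n α β z v j h]
        simp only [map_mul, Complex.conj_I]
        ring
    have h3 : dS n α β z v = Sb + Sa := by
      rw [dS_apply, hSa, hSb, ← Finset.sum_add_distrib]
      refine Finset.sum_congr rfl fun j _ => ?_
      split_ifs with h
      · simp
      · ring
    have h4 : dS0 n α z v = Sb0 + Sa0 := by
      rw [dS0_apply, hSa0, hSb0, ← Finset.sum_add_distrib]
      refine Finset.sum_congr rfl fun j _ => ?_
      split_ifs with h
      · simp
      · ring
    have hcr : Sa - Sa0 = Sb - Sb0 := cross n α β βsymm z v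
    rw [h0, h1, h2, h3, h4]
    linear_combination (1/2 : ℂ) * hcr + (-(Sb0 - Sb - Sa - Sa0)/2) * Complex.I_sq
  · rw [if_neg hk]
    simp only [ContinuousLinearMap.proj_apply]
    exact hJat n α β z v k hk
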